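/- For σ = 10, ρ = 28, b = 8/3, every solution of the Lorenz system that starts in the sublevel set E = {V ≤ 200²} of V(x,y,z) = 28x² + 10y² + 10(z−56)² remains in E for all positive times. -/

import Mathlib

/-- The sublevel set `E = {V ≤ 200²}` of `V(x,y,z) = 28x² + 10y² + 10(z−56)²` is positively
invariant for the standard-parameter Lorenz system. -/
theorem lorenz_trapping_region
    (x y z : ℝ → ℝ)
    (hx : ∀ t, HasDerivAt x (10 * (y t - x t)) t)
    (hy : ∀ t, HasDerivAt y (28 * x t - y t - x t * z t) t)
    (hz : ∀ t, HasDerivAt z (x t * y t - (8/3) * z t) t)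
    (h0 : 28 * (x 0)^2 + 10 * (y 0)^2 + 10 * (z 0 - 56)^2 ≤ 200^2) :
    ∀ t ≥ (0:ℝ), 28 * (x t)^2 + 10 * (y t)^2 + 10 * (z t - 56)^2 ≤ 200^2 := by
  -- the Lyapunov function
  set V : ℝ → ℝ := fun t => 28 * (x t)^2 + 10 * (y t)^2 + 10 * (z t - 56)^2 with hVdef
  have hV : ∀ t, HasDerivAt V
      (28 * (2 * x t * (10 * (y t - x t))) + 10 * (2 * y t * (28 * x t - y t - x t * z t))
        + 10 * (2 * (z t - 56) * (x t * y t - (8/3) * z t))) t := by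
    intro t
    have h1 : HasDerivAt (fun t => (x t)^2) (2 * x t * (10 * (y t - x t))) t := by
      simpa [mul_comm, mul_assoc, mul_left_comm] using ((hx t).fun_pow 2)
    have h2 : HasDerivAt (fun t => (y t)^2) (2 * y t * (28 * x t - y t - x t * z t)) t := by
      simpa [mul_comm, mul_assoc, mul_left_comm] using ((hy t).fun_pow 2)
    have h3 : HasDerivAt (fun t => (z t - 56)^2)
        (2 * (z t - 56) * (x t * y t - (8/3) * z t)) t := by
      simpa [mul_comm, mul_assoc, mul_left_comm] using (((hz t).sub_const 56).fun_pow 2)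
    exact ((h1.const_mul 28).add (h2.const_mul 10)).add (h3.const_mul 10)
  -- the auxiliary function W
  set W : ℝ → ℝ := fun t => (V t - 200^2) * Real.exp (2 * t) with hWdef
  have hE : ∀ t : ℝ, HasDerivAt (fun s => Real.exp (2 * s)) (Real.exp (2 * t) * 2) t := by
    intro t
    simpa using ((hasDerivAt_id t).const_mul 2).exp
  have hW : ∀ t, HasDerivAt W
      ((28 * (2 * x t * (10 * (y t - x t))) + 10 * (2 * y t * (28 * x t - y t - x t * z t))
        + 10 * (2 * (z t - 56) * (x t * y t - (8/3) * z t))) * Real.exp (2 * t)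
        + (V t - 200^2) * (Real.exp (2 * t) * 2)) t := by
    intro t
    exact ((hV t).sub_const (200^2)).mul (hE t)
  have hderiv : ∀ t, deriv W t ≤ 0 := by
    intro t
    rw [(hW t).deriv]
    have hexp : (0:ℝ) < Real.exp (2 * t) := Real.exp_pos _
    have key : (28 * (2 * x t * (10 * (y t - x t))) + 10 * (2 * y t * (28 * x t - y t - x t * z t))
        + 10 * (2 * (z t - 56) * (x t * y t - (8/3) * z t))) + (V t - 200^2) * 2 ≤ 0 := by
      simp only [hVdef]
      nlinarith [sq_nonneg (x t), sq_nonneg (z t - 56/5), sq_nonneg (y t)]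
    nlinarith [mul_le_mul_of_nonneg_right key hexp.le]
  have hanti : Antitone W :=
    antitone_of_deriv_nonpos (fun t => (hW t).differentiableAt) hderiv
  intro t ht
  have hWt : W t ≤ W 0 := hanti ht
  have hW0 : W 0 ≤ 0 := by
    have h1 : V 0 - 200^2 ≤ 0 := by simp only [hVdef]; linarith
    have h2 := mul_nonpos_of_nonpos_of_nonneg h1 (Real.exp_pos (2*(0:ℝ))).le
    simpa [hWdef] using h2
  have hexp : (0:ℝ) < Real.exp (2 * t) := Real.exp_pos _
  have hle : (V t - 200^2) * Real.exp (2 * t) ≤ 0 := hWt.trans hW0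
  have h2 : V t - 200^2 ≤ 0 := by
    by_contra h
    push_neg at h
    nlinarith
  simp only [hVdef] at h2
  linarith
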